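/- Let $H = \mathbb{R}^d$ with orthonormal basis $e_1, \ldots, e_d$, and let $q : \mathbb{R}^d \to [0, \infty)$ be continuous with $q(e_i) > 0$ for each $i = 1, \ldots, d$ and $q(-\sum_{i=1}^d e_i) > 0$. Define the measure $\nu(dz) = q(z)\,dz$. Then for every $h \in \mathbb{R}^d$ and $\eta > 0$ there exist $n \in \mathbb{N}$, positive $\eta_1, \ldots, \eta_n$, and $a_1, \ldots, a_n \in \mathbb{R}^d \setminus \{0\}$ with $0 \notin \overline{B(a_i, \eta_i)}$, $\nu(B(a_i, \eta_i)) > 0$, and $\sum_{i=1}^n B(a_i, \eta_i) \subseteq B(h, \eta)$. -/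

import Mathlib

open MeasureTheory Metric
open scoped InnerProductSpace

lemma aux_meas_pos {d : ℕ} (q : EuclideanSpace ℝ (Fin d) → ℝ) (hqc : Continuous q)
    (a : EuclideanSpace ℝ (Fin d)) (hqa : 0 < q a) {r : ℝ} (hr : 0 < r) :
    0 < (volume.withDensity fun z => ENNReal.ofReal (q z)) (ball a r) := by
  have hopen : IsOpen {x | q a / 2 < q x} := isOpen_lt continuous_const hqc
  obtain ⟨ε, hε, hsub⟩ := Metric.isOpen_iff.1 hopen a (by simp [half_lt_self hqa])
  set ε' := min ε r with hε'
  have hε'pos : 0 < ε' := lt_min hε hr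
  have key : ENNReal.ofReal (q a / 2) * volume (ball a ε')
      ≤ (volume.withDensity fun z => ENNReal.ofReal (q z)) (ball a ε') := by
    rw [withDensity_apply _ measurableSet_ball, ← setLIntegral_const]
    refine setLIntegral_mono' measurableSet_ball fun x hx => ?_
    exact ENNReal.ofReal_le_ofReal (le_of_lt (hsub (ball_subset_ball (min_le_left _ _) hx)))
  have hpos : 0 < ENNReal.ofReal (q a / 2) * volume (ball a ε') := by
    refine ENNReal.mul_pos ?_ ?_
    · simpa using (ENNReal.ofReal_pos.2 (half_pos hqa)).ne'
    · exact (measure_ball_pos volume a hε'pos).ne'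
  exact lt_of_lt_of_le (lt_of_lt_of_le hpos key)
    (measure_mono (ball_subset_ball (min_le_right _ _)))

theorem stmt_18 (d : ℕ) (hd : 0 < d) (q : EuclideanSpace ℝ (Fin d) → ℝ)
    (hq0 : ∀ z, 0 ≤ q z) (hqc : Continuous q)
    (hqe : ∀ i : Fin d, 0 < q (EuclideanSpace.single i 1))
    (hqm : 0 < q (-(∑ i : Fin d, EuclideanSpace.single i (1 : ℝ)))) :
    ∀ h : EuclideanSpace ℝ (Fin d), ∀ η : ℝ, 0 < η →
      ∃ n : ℕ, 0 < n ∧ ∃ (r : Fin n → ℝ) (a : Fin n → EuclideanSpace ℝ (Fin d)),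
        (∀ i, 0 < r i) ∧ (∀ i, a i ≠ 0) ∧
        (∀ i, (0 : EuclideanSpace ℝ (Fin d)) ∉ closedBall (a i) (r i)) ∧
        (∀ i, 0 < (volume.withDensity fun z => ENNReal.ofReal (q z))
          (ball (a i) (r i))) ∧
        (∀ f : Fin n → EuclideanSpace ℝ (Fin d),
          (∀ i, f i ∈ ball (a i) (r i)) → (∑ i, f i) ∈ ball h η) := by
  intro h η hη
  set E : EuclideanSpace ℝ (Fin d) := ∑ i, EuclideanSpace.single i (1 : ℝ) with hE
  -- the norm of E is at least 1
  have hEnorm : (1 : ℝ) ≤ ‖E‖ := by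
    set i0 : Fin d := ⟨0, hd⟩
    have hcoord : (E : EuclideanSpace ℝ (Fin d)) i0 = 1 := by
      rw [hE]
      rw [WithLp.ofLp_sum, Finset.sum_apply]
      simp [EuclideanSpace.single_apply]
    have hinner : ⟪EuclideanSpace.single i0 (1 : ℝ), E⟫_ℝ = 1 := by
      rw [EuclideanSpace.inner_single_left]; simp [hcoord]
    have := norm_inner_le_norm (𝕜 := ℝ) (EuclideanSpace.single i0 (1 : ℝ)) E
    rw [hinner, EuclideanSpace.norm_single] at this
    simpa using this
  -- a radius around -E where q is positive
  obtain ⟨ρ₀, hρ₀pos, hρ₀⟩ := Metric.isOpen_iff.1 (isOpen_lt continuous_const hqc) (-E)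
    (by simpa [hE] using hqm)
  set ρ : ℝ := min ρ₀ (1 / 4) with hρdef
  have hρpos : 0 < ρ := lt_min hρ₀pos (by norm_num)
  obtain ⟨k, hk⟩ := exists_nat_gt (‖h‖ / ρ)
  set K : ℕ := k + 1 with hKdef
  have hKpos : (0 : ℝ) < K := by positivity
  have hhK : ‖h‖ < (K : ℝ) * ρ := by
    have h1 : ‖h‖ < (k : ℝ) * ρ := (div_lt_iff₀ hρpos).1 hk
    have h2 : (k : ℝ) * ρ ≤ (K : ℝ) * ρ := by
      apply mul_le_mul_of_nonneg_right _ hρpos.le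
      exact_mod_cast Nat.le_succ k
    linarith
  set b : EuclideanSpace ℝ (Fin d) := -E + ((K : ℝ)⁻¹) • h with hb
  have hbdist : dist b (-E) < ρ := by
    rw [hb, dist_eq_norm]
    simp only [add_sub_cancel_left, norm_smul, norm_inv, Real.norm_natCast]
    rw [inv_mul_lt_iff₀ hKpos]
    exact hhK
  have hqb : 0 < q b := hρ₀ (mem_ball.2 (lt_of_lt_of_le hbdist (min_le_left _ _)))
  have hbnorm : (3 / 4 : ℝ) ≤ ‖b‖ := by
    have h1 : |‖b‖ - ‖-E‖| ≤ ‖b - -E‖ := abs_norm_sub_norm_le _ _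
    have h2 : ‖b - -E‖ < ρ := by rw [← dist_eq_norm]; exact hbdist
    have h3 : ρ ≤ 1 / 4 := min_le_right _ _
    have h4 : ‖-E‖ = ‖E‖ := norm_neg _
    rw [h4] at h1
    have := abs_le.1 h1
    linarith [this.1]
  -- the centers
  set c : Fin (d + 1) → EuclideanSpace ℝ (Fin d) :=
    Fin.snoc (fun i => EuclideanSpace.single i (1 : ℝ)) b with hc
  have hcq : ∀ y, 0 < q (c y) := by
    intro y
    refine Fin.lastCases ?_ ?_ y
    · simpa [hc, Fin.snoc_last] using hqb
    · intro i; simpa [hc, Fin.snoc_castSucc] using hqe i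
  have hcnorm : ∀ y, (3 / 4 : ℝ) ≤ ‖c y‖ := by
    intro y
    refine Fin.lastCases ?_ ?_ y
    · simpa [hc, Fin.snoc_last] using hbnorm
    · intro i
      rw [hc]
      simp only [Fin.snoc_castSucc]
      rw [EuclideanSpace.norm_single]
      norm_num
  have hsumc : ∑ y, c y = ((K : ℝ)⁻¹) • h := by
    rw [Fin.sum_univ_castSucc]
    simp only [hc, Fin.snoc_castSucc, Fin.snoc_last, hb, ← hE]
    abel
  set n : ℕ := K * (d + 1) with hn
  have hnpos : 0 < n := Nat.mul_pos (Nat.succ_pos k) (Nat.succ_pos d)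
  set a : Fin n → EuclideanSpace ℝ (Fin d) := fun j => c (finProdFinEquiv.symm j).2 with ha
  set r : ℝ := min (η / (2 * n)) (1 / 2) with hr
  have hrpos : 0 < r := by
    apply lt_min _ (by norm_num)
    positivity
  have hrhalf : r ≤ 1 / 2 := min_le_right _ _
  have hanorm : ∀ i, (3 / 4 : ℝ) ≤ ‖a i‖ := fun i => hcnorm _
  refine ⟨n, hnpos, fun _ => r, a, fun _ => hrpos, ?_, ?_, ?_, ?_⟩
  · intro i
    intro h0
    have := hanorm i
    rw [h0] at this
    simp at this
    linarith
  · intro i hmem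
    rw [mem_closedBall, dist_comm, dist_zero_right] at hmem
    have := hanorm i
    linarith [hrhalf]
  · intro i
    exact aux_meas_pos q hqc (a i) (hcq _) hrpos
  · intro f hf
    have hsuma : ∑ j, a j = h := by
      have h1 : ∑ j : Fin n, c ((finProdFinEquiv.symm j).2)
          = ∑ p : Fin K × Fin (d + 1), c p.2 :=
        Equiv.sum_comp finProdFinEquiv.symm (fun p : Fin K × Fin (d + 1) => c p.2)
      have h2 : ∑ p : Fin K × Fin (d + 1), c p.2 = K • ∑ y, c y := by
        rw [Fintype.sum_prod_type]
        simp [Finset.sum_const, Finset.card_univ]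
      rw [ha, h1, h2, hsumc, ← Nat.cast_smul_eq_nsmul ℝ, smul_smul,
        mul_inv_cancel₀ hKpos.ne', one_smul]
    rw [mem_ball, dist_eq_norm, ← hsuma, ← Finset.sum_sub_distrib]
    calc ‖∑ i, (f i - a i)‖ ≤ ∑ i, ‖f i - a i‖ := norm_sum_le _ _
      _ < ∑ _i : Fin n, r := by
          refine Finset.sum_lt_sum_of_nonempty ⟨⟨0, hnpos⟩, Finset.mem_univ _⟩ ?_
          intro i _
          rw [← dist_eq_norm]
          exact mem_ball.1 (hf i)
      _ = n * r := by simp [Finset.sum_const, Finset.card_univ, nsmul_eq_mul]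
      _ ≤ n * (η / (2 * n)) := by
          apply mul_le_mul_of_nonneg_left (min_le_left _ _) (by positivity)
      _ < η := by
          rw [mul_div_assoc']
          rw [div_lt_iff₀ (by positivity)]
          have : (0:ℝ) < n := by exact_mod_cast hnpos
          nlinarith
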